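/- In the setting of the paper with conditions 1⁰–11⁰, fix x ∈ L̄₀ ∩ L₀′ with components x_k = [x]_k, and indices i, j. Say u ≤ e_j satisfies condition (△) if for every f ∈ G, [f(e_i)]_j ≤ u implies [f(x_i)]_j ≤ x_j. Then: if u₁ and u₂ both satisfy (△), so does u₁ + u₂; consequently there exists a maximal element τ_{ij}(x) ≤ e_j satisfying (△). -/

import Mathlib

open Finset

/-- The group of lattice automorphisms of `L` (order automorphisms), with composition as
multiplication. -/
instance latticeAutGroup {L : Type*} [Lattice L] : Group (L ≃o L) where
  mul f g := g.trans f
  one := OrderIso.refl L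
  inv := OrderIso.symm
  mul_assoc f g h := rfl
  one_mul f := rfl
  mul_one f := rfl
  inv_mul_cancel f := by ext x; exact f.symm_apply_apply x

variable {L : Type*} [CompleteLattice L] {n : ℕ}

/-- `ê i`: the join of all the atoms `e j`, `j ≠ i`. -/
def hatE (e : Fin n → L) (i : Fin n) : L := ((univ : Finset (Fin n)).erase i).sup e

/-- The `i`-th component of the support: `[x]ᵢ = (x ⊔ êᵢ) ⊓ eᵢ`. -/
def sc (e : Fin n → L) (x : L) (i : Fin n) : L := (x ⊔ hatE e i) ⊓ e i

/-- The set `L̄₀` of all elements of the form `x₁ ⊔ ⋯ ⊔ xₙ` with `xᵢ ≤ eᵢ`. -/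
def L0bar (e : Fin n → L) : Set L :=
  {x | ∃ y : Fin n → L, (∀ i, y i ≤ e i) ∧ x = (univ : Finset (Fin n)).sup y}

/-- `H = G(L₀)`: the elements of `G` fixing the sublattice `L₀` generated by the atoms
`e₁, …, eₙ` (together with `⊥`, `⊤`) pointwise; equivalently, fixing every `e i`. -/
def Hset (e : Fin n → L) (G : Subgroup (L ≃o L)) : Set (L ≃o L) :=
  {g | g ∈ G ∧ ∀ i, g (e i) = e i}

/-- `L₀′ = L(H)`: the sublattice of elements fixed by every element of `H`. -/
def L0' (e : Fin n → L) (G : Subgroup (L ≃o L)) : Set L :=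
  {x | ∀ h ∈ Hset e G, h x = x}

/-- `Hᵢ`: the automorphisms in `H` which fix every `x ∈ L` with `[x]ᵢ = ⊥`. -/
def HiSet (e : Fin n → L) (G : Subgroup (L ≃o L)) (i : Fin n) : Set (L ≃o L) :=
  {h | h ∈ Hset e G ∧ ∀ x : L, sc e x i = ⊥ → h x = x}

/-- The set `H_{ij}(x)` of transvections: elements `f ∈ G` such that
(1) `f y = y` for every `s ≠ i` and `y ≤ e s`;
(2) `[f y]ᵢ = y` for every `y ≤ eᵢ`;
(3) `[f eᵢ]ₖ = ⊥` for `k ∉ {i,j}`, `[f eᵢ]ᵢ = eᵢ` and `[f eᵢ]ⱼ = x`. -/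
def Hij (e : Fin n → L) (G : Subgroup (L ≃o L)) (i j : Fin n) (x : L) : Set (L ≃o L) :=
  {f | f ∈ G ∧
       (∀ s, s ≠ i → ∀ y, y ≤ e s → f y = y) ∧
       (∀ y, y ≤ e i → sc e (f y) i = y) ∧
       (∀ k, k ≠ i → k ≠ j → sc e (f (e i)) k = ⊥) ∧
       sc e (f (e i)) i = e i ∧ sc e (f (e i)) j = x}

/-- `G(S)`: the pointwise stabilizer in `G` of a set `S ⊆ L`. -/
def GFix (G : Subgroup (L ≃o L)) (S : Set L) : Set (L ≃o L) :=
  {g | g ∈ G ∧ ∀ x ∈ S, g x = x}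

/-- The sublattice of `L` generated by a set `S` (the smallest subset containing `S` closed
under `⊔` and `⊓`). -/
def latClosure (S : Set L) : Set L :=
  ⋂₀ {T : Set L | S ⊆ T ∧ ∀ a ∈ T, ∀ b ∈ T, a ⊔ b ∈ T ∧ a ⊓ b ∈ T}

/-- The ideal of transvections `σ_{ij}(F)`: for `i ≠ j`, the join of all `x ≤ eⱼ` with
`H_{ij}(x) ∩ F ≠ ∅`; and `σ_{ii} = eᵢ`. -/
def sigmaF (e : Fin n → L) (G : Subgroup (L ≃o L)) (F : Subgroup (L ≃o L))
    (i j : Fin n) : L :=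
  if i = j then e i
  else sSup {x | x ≤ e j ∧ (Hij e G i j x ∩ (F : Set (L ≃o L))).Nonempty}

/-- A net collection in `L₀′`: a family `(τ_{ij})` with `τ_{ij} ≤ eⱼ`, `τ_{ii} = eᵢ`,
`τ_{ij} ∈ L₀′`, and such that for every `g ∈ G`:
`[g eᵢ]ⱼ ≤ τ_{ij}` for all `i, j` iff `[g τ_{ki}]ⱼ ≤ τ_{kj}` for all `i, j, k`. -/
def IsNetCollection (e : Fin n → L) (G : Subgroup (L ≃o L)) (τ : Fin n → Fin n → L) : Prop :=
  (∀ i j, τ i j ≤ e j) ∧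
  (∀ i, τ i i = e i) ∧
  (∀ i j, τ i j ∈ L0' e G) ∧
  (∀ g ∈ G, (∀ i j, sc e (g (e i)) j ≤ τ i j) ↔
      (∀ i j k, sc e (g (τ k i)) j ≤ τ k j))

/-- The sublattice `K_τ` of `L₀′` generated by `⊥` and the elements `⨆ⱼ τ_{ij}`. -/
def Kτ (τ : Fin n → Fin n → L) : Set L :=
  latClosure ({⊥} ∪ Set.range fun i => (univ : Finset (Fin n)).sup (τ i))

/-- **The conditions 1⁰–11⁰ of the paper** for the data: a modular lattice `L` of finite
length, the atoms `e₁, …, eₙ` of a Boolean sublattice `L₀` with the same `⊥` and `⊤` as `L`,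
a subgroup `G ≤ Aut L`, and the common value `m` of the dimension on the atoms. -/
structure PaperConditions (e : Fin n → L) (G : Subgroup (L ≃o L)) (m : ℕ) : Prop where
  /-- `L₀` is a Boolean algebra with atoms `e₁, …, eₙ`: the atoms are nonzero, -/
  atom_ne_bot : ∀ i, e i ≠ ⊥
  /-- independent (`eᵢ ⊓ êᵢ = ⊥`), -/
  indep : ∀ i, e i ⊓ hatE e i = ⊥
  /-- and (condition `1⁰`) `1_{L₀} = 1_L`, i.e. `⨆ᵢ eᵢ = ⊤` (also `0_{L₀} = 0_L = ⊥`). -/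
  sup_eq_top : (univ : Finset (Fin n)).sup e = ⊤
  /-- Condition `2⁰`: the dimension function is constant, with value `m`, on the atoms. -/
  height_atom : ∀ i, Order.height (e i) = (m : ℕ∞)
  /-- Condition `3⁰`. -/
  c3 : ∀ a ∈ G, ∀ i, sc e ((a : L ≃o L) (e i)) i = e i →
      ∃ h ∈ HiSet e G i, ∀ y, y ≤ e i →
        sc e (h ((a : L ≃o L) y)) i = y ∧ sc e ((a : L ≃o L) (h y)) i = y
  /-- Condition `4⁰`. -/
  c4 : ∀ t i : Fin n, ∃ h, h ∈ HiSet e G t ∧ (∀ z ∈ L0bar e, h z = z) ∧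
      ∀ a ∈ G, ∀ r, r ≠ i → ∀ y, y ≤ e i →
        sc e ((a : L ≃o L) (h ((a : L ≃o L).symm y))) r
          = sc e ((a : L ≃o L) (sc e ((a : L ≃o L).symm y) t)) r
  /-- Condition `5⁰`. -/
  c5 : ∀ u ∈ L0bar e, ∀ i, e i ≤ u → ∀ g ∈ G, sc e ((g : L ≃o L) u) i = e i →
      ∃ t ∈ G, sc e ((g : L ≃o L) ((t : L ≃o L) (e i))) i = e i ∧
        (∀ s, s ≠ i → (t : L ≃o L) (e s) = e s) ∧
        ∀ j, sc e ((t : L ≃o L) (e i)) j ≤ sc e u j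
  /-- Condition `6⁰`. -/
  c6 : ∀ f ∈ G, ∀ g ∈ G, ∀ i j : Fin n,
      sc e ((f : L ≃o L) (e i)) j ≤ sc e ((g : L ≃o L) (e i)) j →
      ∀ x ∈ L0' e G, x ≤ e i → sc e ((f : L ≃o L) x) j ≤ sc e ((g : L ≃o L) x) j
  /-- Condition `7⁰`. -/
  c7 : ∀ j : Fin n, ∀ u, u ≤ e j → ∀ i, i ≠ j →
      ∃ (s : ℕ) (y : Fin s → L), (∀ r, y r ≤ e j) ∧
        u = (univ : Finset (Fin s)).sup y ∧ ∀ r, (Hij e G i j (y r)).Nonempty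
  /-- Condition `8⁰`. -/
  c8 : ∀ f ∈ G, ∀ i j : Fin n, i ≠ j →
      ∃ g ∈ Hij e G i j (sc e ((f : L ≃o L) (e i)) j),
        ∀ u, u ≤ e i → sc e (g u) j = sc e ((f : L ≃o L) u) j
  /-- Condition `9⁰`. -/
  c9 : ∀ i j : Fin n, i ≠ j → ∀ x, x ≤ e j → ∀ w : L,
      Order.height w = (m : ℕ∞) →
      sc e w i = e i → sc e w j = x → (∀ k, k ≠ i → k ≠ j → sc e w k = ⊥) →
      (Hij e G i j x).Nonempty → ∃ t ∈ Hij e G i j x, t w = e i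
  /-- Condition `10⁰`. -/
  c10 : ∀ i j : Fin n, i ≠ j → ∀ (s : ℕ) (xs : Fin s → L) (a : Fin s → (L ≃o L)),
      (∀ r, a r ∈ Hij e G i j (xs r)) →
      ∀ y, y ≤ (univ : Finset (Fin s)).sup xs → (Hij e G i j y).Nonempty →
      Hij e G i j y ⊆ ↑(Subgroup.closure (Hset e G ∪ Set.range a))
  /-- Condition `11⁰`. -/
  c11 : ∀ a ∈ G, ∀ t : Fin n, ∀ i j : Fin n, i ≠ j → ∀ h ∈ HiSet e G t,
      (Hij e G i j (sc e ((a : L ≃o L) (h ((a : L ≃o L).symm (e i)))) j) ∩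
        ↑(Subgroup.closure (insert (a : L ≃o L) (Hset e G)))).Nonempty

section AuxLemmas

variable {L' : Type*} [CompleteLattice L'] {n : ℕ}

private lemma orderIso_finsetSup {ι : Type*} (h : L' ≃o L') (s : Finset ι) (f : ι → L') :
    h (s.sup f) = s.sup fun t => h (f t) := by
  classical
  induction s using Finset.induction_on with
  | empty => simpa using h.map_bot
  | insert _ _ hx ih => rw [Finset.sup_insert, Finset.sup_insert, OrderIso.map_sup, ih]

private lemma sc_mono (e : Fin n → L') {a b : L'} (h : a ≤ b) (k : Fin n) :
    sc e a k ≤ sc e b k :=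
  inf_le_inf_right _ (sup_le_sup_right h _)

private lemma le_hatE (e : Fin n → L') {k i : Fin n} (h : k ≠ i) : e k ≤ hatE e i :=
  Finset.le_sup (Finset.mem_erase.2 ⟨h, Finset.mem_univ _⟩)

variable [IsModularLattice L']

/-- `w ≤ [w]ₖ ⊔ êₖ`. -/
private lemma le_sc_sup_hatE (e : Fin n → L')
    (htop : (univ : Finset (Fin n)).sup e = ⊤) (w : L') (k : Fin n) :
    w ≤ sc e w k ⊔ hatE e k := by
  have htk : e k ⊔ hatE e k = ⊤ := by
    rw [hatE, ← Finset.sup_insert, Finset.insert_erase (Finset.mem_univ k), htop]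
  have : sc e w k ⊔ hatE e k = (w ⊔ hatE e k) ⊓ (e k ⊔ hatE e k) := by
    rw [sc, inf_sup_assoc_of_le _ le_sup_right]
  rw [this, htk, inf_top_eq]
  exact le_sup_left

/-- If all components of `w` outside `{i, j}` vanish, then `w ≤ eᵢ ⊔ eⱼ`. -/
private lemma le_two_atoms (e : Fin n → L') (hind : ∀ k, e k ⊓ hatE e k = ⊥)
    (htop : (univ : Finset (Fin n)).sup e = ⊤) {w : L'} {i j : Fin n}
    (hv : ∀ k, k ≠ i → k ≠ j → sc e w k = ⊥) :
    w ≤ e i ⊔ e j := by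
  classical
  have key : ∀ T : Finset (Fin n), w ≤ (univ \ T).sup e ⊔ (e i ⊔ e j) := by
    intro T
    induction T using Finset.induction_on with
    | empty =>
      refine le_sup_of_le_left ?_
      rw [Finset.sdiff_empty, htop]; exact le_top
    | @insert k T hk ih =>
      have hsub : (univ \ T).sup e ≤ (univ \ insert k T).sup e ⊔ e k := by
        refine Finset.sup_le fun t ht => ?_
        by_cases htk : t = k
        · subst htk; exact le_sup_right
        · refine le_sup_of_le_left (Finset.le_sup ?_)
          simp only [Finset.mem_sdiff, Finset.mem_univ, true_and, Finset.mem_insert] at ht ⊢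
          tauto
      by_cases hki : k = i ∨ k = j
      · have hek : e k ≤ e i ⊔ e j := by
          rcases hki with rfl | rfl
          · exact le_sup_left
          · exact le_sup_right
        exact ih.trans (sup_le (hsub.trans (sup_le le_sup_left
          (hek.trans le_sup_right))) le_sup_right)
      · push_neg at hki
        have hwk : w ≤ hatE e k := by
          have := le_sc_sup_hatE e htop w k
          rwa [hv k hki.1 hki.2, bot_sup_eq] at this
        set A := (univ \ insert k T).sup e ⊔ (e i ⊔ e j) with hA
        have hAle : A ≤ hatE e k := by
          refine sup_le (Finset.sup_le fun t ht => ?_) (sup_le ?_ ?_)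
          · refine le_hatE e ?_
            simp only [Finset.mem_sdiff, Finset.mem_univ, true_and, Finset.mem_insert,
              not_or] at ht
            exact ht.1
          · exact le_hatE e fun h => hki.1 h.symm
          · exact le_hatE e fun h => hki.2 h.symm
        have h1 : w ≤ A ⊔ e k := ih.trans (by
          refine sup_le_sup_right hsub _ |>.trans ?_
          rw [hA, sup_right_comm])
        have h2 : w ≤ (A ⊔ e k) ⊓ hatE e k := le_inf h1 hwk
        rwa [sup_inf_assoc_of_le _ hAle, hind k, sup_bot_eq] at h2
  have := key univ
  rwa [Finset.sdiff_self, Finset.sup_empty, bot_sup_eq] at this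

/-- If all components of `w` outside `{i, j}` vanish, then `w ≤ [w]ᵢ ⊔ [w]ⱼ`. -/
private lemma le_sc_sup_sc (e : Fin n → L') (hind : ∀ k, e k ⊓ hatE e k = ⊥)
    (htop : (univ : Finset (Fin n)).sup e = ⊤) {w : L'} {i j : Fin n} (hij : i ≠ j)
    (hv : ∀ k, k ≠ i → k ≠ j → sc e w k = ⊥) :
    w ≤ sc e w i ⊔ sc e w j := by
  have hw2 : w ≤ e i ⊔ e j := le_two_atoms e hind htop hv
  have heij : e i ⊓ e j = ⊥ :=
    le_bot_iff.1 ((inf_le_inf_left _ (le_hatE e hij.symm)).trans (hind i).le)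
  have hEi : hatE e i ⊓ (e i ⊔ e j) = e j := by
    rw [inf_comm, sup_comm, sup_inf_assoc_of_le _ (le_hatE e hij.symm), hind i, sup_bot_eq]
  have hEj : hatE e j ⊓ (e i ⊔ e j) = e i := by
    rw [inf_comm, sup_inf_assoc_of_le _ (le_hatE e hij), hind j, sup_bot_eq]
  have h1 : w ≤ sc e w i ⊔ e j := by
    have h := le_inf (le_sc_sup_hatE e htop w i) hw2
    have hsc_le : sc e w i ≤ e i ⊔ e j := inf_le_right.trans le_sup_left
    rwa [sup_inf_assoc_of_le _ hsc_le, hEi] at h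
  have h2 : w ≤ sc e w j ⊔ e i := by
    have h := le_inf (le_sc_sup_hatE e htop w j) hw2
    have hsc_le : sc e w j ≤ e i ⊔ e j := inf_le_right.trans le_sup_right
    rwa [sup_inf_assoc_of_le _ hsc_le, hEj] at h
  have h3 : w ≤ (sc e w i ⊔ e j) ⊓ (sc e w j ⊔ e i) := le_inf h1 h2
  have hscij : sc e w i ≤ sc e w j ⊔ e i := inf_le_right.trans le_sup_right
  calc w ≤ (sc e w i ⊔ e j) ⊓ (sc e w j ⊔ e i) := h3
    _ = sc e w i ⊔ (e j ⊓ (sc e w j ⊔ e i)) := sup_inf_assoc_of_le _ hscij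
    _ = sc e w i ⊔ ((sc e w j ⊔ e i) ⊓ e j) := by rw [inf_comm]
    _ = sc e w i ⊔ (sc e w j ⊔ e i ⊓ e j) := by
        have hby : sc e w j ≤ e j := inf_le_right
        rw [sup_inf_assoc_of_le _ hby]
    _ = sc e w i ⊔ sc e w j := by rw [heij, sup_bot_eq]

/-- A transvection fixing the relevant element `xᵢ ⊔ xⱼ`. -/
private lemma hij_fix_sup {e : Fin n → L'} {G : Subgroup (L' ≃o L')}
    (hind : ∀ k, e k ⊓ hatE e k = ⊥) (htop : (univ : Finset (Fin n)).sup e = ⊤)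
    {i j : Fin n} (hij : i ≠ j) {a : L' ≃o L'} {v : L'} (ha : a ∈ Hij e G i j v)
    {xi xj : L'} (hxi : xi ≤ e i) (hxj : xj ≤ e j)
    (haxj : sc e (a xi) j ≤ xj) :
    a (xi ⊔ xj) = xi ⊔ xj := by
  obtain ⟨-, h1, h2, h4, -, -⟩ := ha
  set w := a xi with hw
  have hwi : sc e w i = xi := h2 xi hxi
  have hwk : ∀ k, k ≠ i → k ≠ j → sc e w k = ⊥ := fun k hki hkj =>
    le_bot_iff.1 <| (sc_mono e (a.monotone hxi) k).trans_eq (h4 k hki hkj)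
  have hw2 : w ≤ e i ⊔ e j := le_two_atoms e hind htop hwk
  have hwle : w ≤ xi ⊔ xj := by
    refine (le_sc_sup_sc e hind htop hij hwk).trans ?_
    rw [hwi]
    exact sup_le_sup_left haxj _
  have hxiw : xi ≤ w ⊔ xj := by
    have hEi : hatE e i ⊓ (e i ⊔ e j) = e j := by
      rw [inf_comm, sup_comm, sup_inf_assoc_of_le _ (le_hatE e hij.symm), hind i, sup_bot_eq]
    have hxi_le : xi ≤ w ⊔ e j := by
      have h0a : xi ≤ w ⊔ hatE e i := by rw [← hwi, sc]; exact inf_le_left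
      have h0 : xi ≤ (w ⊔ hatE e i) ⊓ (e i ⊔ e j) := le_inf h0a (hxi.trans le_sup_left)
      rwa [sup_inf_assoc_of_le _ hw2, hEi] at h0
    have hx2 : xi ≤ (w ⊔ e j) ⊓ (w ⊔ e i) :=
      le_inf hxi_le (hxi.trans le_sup_right)
    rw [sup_inf_assoc_of_le _ le_sup_left] at hx2
    have h5 : e j ⊓ (w ⊔ e i) ≤ xj := by
      have h6 : e j ⊓ (w ⊔ e i) ≤ sc e w j := by
        rw [inf_comm, sc]
        exact inf_le_inf_right _ (sup_le_sup_left (le_hatE e hij) w)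
      exact h6.trans haxj
    exact hx2.trans (sup_le_sup_left h5 w)
  have hfixj : a xj = xj := h1 j hij.symm xj hxj
  rw [OrderIso.map_sup, hfixj, ← hw]
  exact le_antisymm (sup_le hwle le_sup_right) (sup_le hxiw le_sup_right)

/-- The engine: if `u` is covered by a family of transvection values whose transvections
move `xᵢ` into `xⱼ` (in the `j`-component), then `u` satisfies condition `(△)`. -/
private lemma engine {e : Fin n → L'} {G : Subgroup (L' ≃o L')} {m : ℕ}
    (hc : PaperConditions e G m) {x : L'} (hx : x ∈ L0' e G) {i j : Fin n} (hij : i ≠ j)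
    {u : L'} (s : ℕ) (xs : Fin s → L') (a : Fin s → (L' ≃o L'))
    (ha : ∀ r, a r ∈ Hij e G i j (xs r))
    (hsup : u ≤ (univ : Finset (Fin s)).sup xs)
    (hax : ∀ r, sc e ((a r) (sc e x i)) j ≤ sc e x j) :
    ∀ f ∈ G, sc e (f (e i)) j ≤ u → sc e (f (sc e x i)) j ≤ sc e x j := by
  intro f hf hfu
  obtain ⟨g, hg, hgf⟩ := hc.c8 f hf i j hij
  have hgclos : g ∈ Subgroup.closure (Hset e G ∪ Set.range a) :=
    hc.c10 i j hij s xs a ha _ (hfu.trans hsup) ⟨g, hg⟩ hg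
  have hz : g (sc e x i ⊔ sc e x j) = sc e x i ⊔ sc e x j := by
    refine Subgroup.closure_induction
      (p := fun c _ => c (sc e x i ⊔ sc e x j) = sc e x i ⊔ sc e x j)
      ?_ rfl ?_ ?_ hgclos
    · rintro c (hc' | ⟨r, rfl⟩)
      · have hxfix : c x = x := hx c hc'
        have hce : ∀ k, c (e k) = e k := hc'.2
        have hhat : ∀ k, c (hatE e k) = hatE e k := fun k => by
          rw [hatE, orderIso_finsetSup]
          exact Finset.sup_congr rfl fun t _ => hce t
        have hsc : ∀ k, c (sc e x k) = sc e x k := fun k => by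
          rw [sc, OrderIso.map_inf, OrderIso.map_sup, hxfix, hhat, hce]
        rw [OrderIso.map_sup, hsc, hsc]
      · exact hij_fix_sup hc.indep hc.sup_eq_top hij (ha r)
          inf_le_right inf_le_right (hax r)
    · intro p q _ _ hp hq
      show p (q _) = _
      rw [hq, hp]
    · intro p _ hp
      show p.symm _ = _
      exact (OrderIso.symm_apply_eq p).mpr hp.symm
  have h1 : g (sc e x i) ≤ sc e x i ⊔ sc e x j := by
    have h := g.monotone (le_sup_left : sc e x i ≤ sc e x i ⊔ sc e x j)
    rwa [hz] at h
  have h2 : sc e (g (sc e x i)) j ≤ sc e (sc e x i ⊔ sc e x j) j := sc_mono e h1 j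
  have h3 : sc e (sc e x i ⊔ sc e x j) j = sc e x j := by
    have hxihat : sc e x i ≤ hatE e j := inf_le_right.trans (le_hatE e hij)
    have hxj : sc e x j ≤ e j := inf_le_right
    have hsupeq : sc e x i ⊔ sc e x j ⊔ hatE e j = sc e x j ⊔ hatE e j :=
      le_antisymm (sup_le (sup_le (hxihat.trans le_sup_right) le_sup_left) le_sup_right)
        (sup_le_sup_right le_sup_right _)
    show (sc e x i ⊔ sc e x j ⊔ hatE e j) ⊓ e j = sc e x j
    rw [hsupeq, sup_inf_assoc_of_le _ hxj, inf_comm (hatE e j), hc.indep j, sup_bot_eq]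
  have h4 := hgf (sc e x i) inf_le_right
  rw [← h4]
  exact h2.trans h3.le

end AuxLemmas

/-- **Lemma 10.1 and its Corollary.** In the setting of the paper with conditions
`1⁰`–`11⁰`, fix `x ∈ L̄₀ ∩ L₀′` with components `x_k = [x]_k`, and indices `i, j`.
Say `u ≤ eⱼ` satisfies condition `(△)` if for every `f ∈ G`, `[f eᵢ]ⱼ ≤ u` implies
`[f xᵢ]ⱼ ≤ xⱼ`. Then: if `u₁, u₂` both satisfy `(△)`, so does `u₁ ⊔ u₂`; consequently
there exists a maximal element `τ_{ij}(x) ≤ eⱼ` satisfying `(△)`. -/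
theorem triangle_condition_sup_and_max {L : Type*} [CompleteLattice L] [IsModularLattice L]
    [WellFoundedLT L] [WellFoundedGT L] {n : ℕ} (e : Fin n → L)
    (G : Subgroup (L ≃o L)) (m : ℕ)
    (hc : PaperConditions e G m)
    (x : L) (hx : x ∈ L0bar e ∩ L0' e G) (i j : Fin n) (hij : i ≠ j) :
    (∀ u₁ u₂,
        (u₁ ≤ e j ∧ ∀ f ∈ G, sc e ((f : L ≃o L) (e i)) j ≤ u₁ →
            sc e ((f : L ≃o L) (sc e x i)) j ≤ sc e x j) →
        (u₂ ≤ e j ∧ ∀ f ∈ G, sc e ((f : L ≃o L) (e i)) j ≤ u₂ →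
            sc e ((f : L ≃o L) (sc e x i)) j ≤ sc e x j) →
        (u₁ ⊔ u₂ ≤ e j ∧ ∀ f ∈ G, sc e ((f : L ≃o L) (e i)) j ≤ u₁ ⊔ u₂ →
            sc e ((f : L ≃o L) (sc e x i)) j ≤ sc e x j)) ∧
    ∃ τ, IsGreatest {u | u ≤ e j ∧ ∀ f ∈ G, sc e ((f : L ≃o L) (e i)) j ≤ u →
            sc e ((f : L ≃o L) (sc e x i)) j ≤ sc e x j} τ := by
  obtain ⟨-, hx'⟩ := hx
  have part1 : ∀ u₁ u₂,
      (u₁ ≤ e j ∧ ∀ f ∈ G, sc e ((f : L ≃o L) (e i)) j ≤ u₁ →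
          sc e ((f : L ≃o L) (sc e x i)) j ≤ sc e x j) →
      (u₂ ≤ e j ∧ ∀ f ∈ G, sc e ((f : L ≃o L) (e i)) j ≤ u₂ →
          sc e ((f : L ≃o L) (sc e x i)) j ≤ sc e x j) →
      (u₁ ⊔ u₂ ≤ e j ∧ ∀ f ∈ G, sc e ((f : L ≃o L) (e i)) j ≤ u₁ ⊔ u₂ →
          sc e ((f : L ≃o L) (sc e x i)) j ≤ sc e x j) := by
    rintro u₁ u₂ ⟨h1e, h1⟩ ⟨h2e, h2⟩
    refine ⟨sup_le h1e h2e, ?_⟩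
    obtain ⟨s₁, y₁, hy₁, hu₁, hne₁⟩ := hc.c7 j u₁ h1e i hij
    obtain ⟨s₂, y₂, hy₂, hu₂, hne₂⟩ := hc.c7 j u₂ h2e i hij
    have ha₁ : ∀ r, (hne₁ r).choose ∈ Hij e G i j (y₁ r) := fun r => (hne₁ r).choose_spec
    have ha₂ : ∀ r, (hne₂ r).choose ∈ Hij e G i j (y₂ r) := fun r => (hne₂ r).choose_spec
    set xs : Fin (s₁ + s₂) → L := Fin.append y₁ y₂ with hxsdef
    set aa : Fin (s₁ + s₂) → (L ≃o L) :=
      Fin.append (fun r => (hne₁ r).choose) (fun r => (hne₂ r).choose) with haadef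
    have hmem : ∀ r, aa r ∈ Hij e G i j (xs r) := by
      intro r
      refine Fin.addCases (fun p => ?_) (fun p => ?_) r
      · rw [hxsdef, haadef, Fin.append_left, Fin.append_left]; exact ha₁ p
      · rw [hxsdef, haadef, Fin.append_right, Fin.append_right]; exact ha₂ p
    have hsup : u₁ ⊔ u₂ ≤ (univ : Finset (Fin (s₁ + s₂))).sup xs := by
      refine sup_le ?_ ?_
      · rw [hu₁]
        refine Finset.sup_le fun p _ => ?_
        have : y₁ p = xs (Fin.castAdd s₂ p) := (Fin.append_left _ _ _).symm
        rw [this]; exact Finset.le_sup (Finset.mem_univ _)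
      · rw [hu₂]
        refine Finset.sup_le fun p _ => ?_
        have : y₂ p = xs (Fin.natAdd s₁ p) := (Fin.append_right _ _ _).symm
        rw [this]; exact Finset.le_sup (Finset.mem_univ _)
    have hax : ∀ r, sc e ((aa r) (sc e x i)) j ≤ sc e x j := by
      intro r
      refine Fin.addCases (fun p => ?_) (fun p => ?_) r
      · have hm := ha₁ p
        have hGm : (hne₁ p).choose ∈ G := hm.1
        have hval : sc e ((hne₁ p).choose (e i)) j = y₁ p := hm.2.2.2.2.2
        have hle : sc e ((hne₁ p).choose (e i)) j ≤ u₁ := by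
          rw [hval, hu₁]; exact Finset.le_sup (Finset.mem_univ p)
        have := h1 _ hGm hle
        rw [haadef, Fin.append_left]
        exact this
      · have hm := ha₂ p
        have hGm : (hne₂ p).choose ∈ G := hm.1
        have hval : sc e ((hne₂ p).choose (e i)) j = y₂ p := hm.2.2.2.2.2
        have hle : sc e ((hne₂ p).choose (e i)) j ≤ u₂ := by
          rw [hval, hu₂]; exact Finset.le_sup (Finset.mem_univ p)
        have := h2 _ hGm hle
        rw [haadef, Fin.append_right]
        exact this
    exact engine hc hx' hij (s₁ + s₂) xs aa hmem hsup hax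
  refine ⟨part1, ?_⟩
  have hbot : (⊥ : L) ≤ e j ∧ ∀ f ∈ G, sc e ((f : L ≃o L) (e i)) j ≤ (⊥ : L) →
      sc e ((f : L ≃o L) (sc e x i)) j ≤ sc e x j := by
    refine ⟨bot_le, ?_⟩
    obtain ⟨s₀, y₀, hy₀, hb, hne₀⟩ := hc.c7 j ⊥ bot_le i hij
    have ha₀ : ∀ r, (hne₀ r).choose ∈ Hij e G i j (y₀ r) := fun r => (hne₀ r).choose_spec
    have hax : ∀ r, sc e ((hne₀ r).choose (sc e x i)) j ≤ sc e x j := by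
      intro r
      have hmono : sc e ((hne₀ r).choose (sc e x i)) j ≤ sc e ((hne₀ r).choose (e i)) j :=
        sc_mono e ((hne₀ r).choose.monotone inf_le_right) j
      have hval : sc e ((hne₀ r).choose (e i)) j = y₀ r := (ha₀ r).2.2.2.2.2
      have : y₀ r ≤ (⊥ : L) := hb ▸ Finset.le_sup (Finset.mem_univ r)
      exact (hmono.trans (hval.le.trans this)).trans bot_le
    exact engine hc hx' hij s₀ y₀ _ ha₀ bot_le hax
  obtain ⟨τ, hτS, hmax⟩ :=
    (IsWellFounded.wf : WellFounded ((· > ·) : L → L → Prop)).has_min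
      {u | u ≤ e j ∧ ∀ f ∈ G, sc e ((f : L ≃o L) (e i)) j ≤ u →
          sc e ((f : L ≃o L) (sc e x i)) j ≤ sc e x j} ⟨⊥, hbot⟩
  refine ⟨τ, hτS, fun u hu => ?_⟩
  have hsupS := part1 u τ hu hτS
  have hnot := hmax (u ⊔ τ) hsupS
  have heq : u ⊔ τ = τ := by
    rcases lt_or_eq_of_le (le_sup_right : τ ≤ u ⊔ τ) with h | h
    · exact absurd h hnot
    · exact h.symm
  exact le_sup_left.trans heq.le
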